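/- Let q_{k,m} denote the coefficient of t^m in the Laplace polynomial Q_k(t). Then q_{k,m} = 0 whenever m > k or k − m is odd, and if k ≥ m with k − m = 2n even, then q_{k,m} = (((k+m)/2)!/m!) · 2^{−n} · Σ_{j=0}^{n} C(k+1, j), where C(·,·) denotes the binomial coefficient. -/

import Mathlib

open Polynomial

/-- The Laplace polynomials `P_k`. -/
noncomputable def laplaceP : ℕ → Polynomial ℝ
  | 0 => 1
  | k + 1 => X * laplaceP k + derivative (laplaceP k)

/-- The Laplace polynomials `Q_k`. -/
noncomputable def laplaceQ : ℕ → Polynomial ℝ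
  | 0 => 1
  | k + 1 => laplaceP (k + 1) + derivative (laplaceQ k)

lemma coeff_succ_P (k m : ℕ) :
    (laplaceP (k+1)).coeff (m+1) = (laplaceP k).coeff m + (laplaceP k).coeff (m+2) * (m+2) := by
  show (X * laplaceP k + derivative (laplaceP k)).coeff (m+1) = _
  rw [coeff_add, coeff_X_mul, coeff_derivative]
  push_cast
  ring_nf

lemma coeff_zero_P (k : ℕ) :
    (laplaceP (k+1)).coeff 0 = (laplaceP k).coeff 1 := by
  show (X * laplaceP k + derivative (laplaceP k)).coeff 0 = _
  rw [coeff_add, mul_coeff_zero, coeff_X_zero, coeff_derivative]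
  push_cast
  ring

lemma coeff_Q (k m : ℕ) :
    (laplaceQ (k+1)).coeff m = (laplaceP (k+1)).coeff m + (laplaceQ k).coeff (m+1) * (m+1) := by
  show (laplaceP (k+1) + derivative (laplaceQ k)).coeff m = _
  rw [coeff_add, coeff_derivative]

lemma P_coeff : ∀ k m : ℕ,
    ((∀ n, k ≠ m + 2*n) → (laplaceP k).coeff m = 0) ∧
    (∀ n : ℕ, k = m + 2*n → (laplaceP k).coeff m =
      (k.factorial : ℝ) / (m.factorial * n.factorial * 2^n)) := by
  intro k
  induction k with
  | zero =>
    intro m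
    constructor
    · intro h
      have hm : m ≠ 0 := fun h0 => h 0 (by omega)
      show (1 : Polynomial ℝ).coeff m = 0
      simp [coeff_one, hm]
    · intro n hn
      have hm : m = 0 := by omega
      have hn0 : n = 0 := by omega
      subst hm; subst hn0
      show (1 : Polynomial ℝ).coeff 0 = _
      simp
  | succ k ih =>
    intro m
    constructor
    · intro h
      match m with
      | 0 =>
        rw [coeff_zero_P]
        exact (ih 1).1 (fun n hn => h (n+1) (by omega))
      | m' + 1 =>
        rw [coeff_succ_P]
        rw [(ih m').1 (fun n hn => h n (by omega)),
            (ih (m'+2)).1 (fun n hn => h (n+1) (by omega))]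
        ring
    · intro n hn
      match m with
      | 0 =>
        rw [coeff_zero_P]
        obtain ⟨n', rfl⟩ : ∃ n', n = n' + 1 := ⟨n - 1, by omega⟩
        rw [(ih 1).2 n' (by omega)]
        have hk : (k:ℝ) = 2*(n':ℝ)+1 := by exact_mod_cast congrArg (Nat.cast : ℕ → ℝ) (show k = 2*n'+1 by omega)
        rw [Nat.factorial_succ k, Nat.factorial_succ n']
        have f1 : (n'.factorial:ℝ) ≠ 0 := by positivity
        have f2 : (k.factorial:ℝ) ≠ 0 := by positivity
        push_cast
        rw [hk]
        field_simp
        ring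
      | m' + 1 =>
        rw [coeff_succ_P]
        match n with
        | 0 =>
          have hk : k = m' := by omega
          subst hk
          rw [(ih k).2 0 (by omega), (ih (k+2)).1 (fun n hn => by omega)]
          have f2 : (k.factorial:ℝ) ≠ 0 := by positivity
          rw [Nat.factorial_succ k]
          push_cast
          field_simp
          simp
        | n'' + 1 =>
          rw [(ih m').2 (n''+1) (by omega), (ih (m'+2)).2 n'' (by omega)]
          have hk : (k:ℝ) = (m':ℝ) + 2*(n'':ℝ) + 2 := by
            exact_mod_cast congrArg (Nat.cast : ℕ → ℝ) (show k = m' + 2*n'' + 2 by omega)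
          rw [Nat.factorial_succ k, Nat.factorial_succ n'', Nat.factorial_succ (m'+1), Nat.factorial_succ m']
          have f1 : (n''.factorial:ℝ) ≠ 0 := by positivity
          have f2 : (k.factorial:ℝ) ≠ 0 := by positivity
          have f3 : (m'.factorial:ℝ) ≠ 0 := by positivity
          push_cast
          rw [hk]
          field_simp
          ring

lemma sum_choose (k n : ℕ) :
    ∑ j ∈ Finset.range (n+1), (k+2).choose j
      = (k+1).choose n + 2 * ∑ j ∈ Finset.range n, (k+1).choose j := by
  induction n with
  | zero => simp
  | succ n ih =>
    rw [Finset.sum_range_succ, ih, Finset.sum_range_succ,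
        show (k+2) = (k+1)+1 from rfl, Nat.choose_succ_succ (k+1) n]
    ring

lemma Q_coeff : ∀ k m : ℕ,
    ((∀ n, k ≠ m + 2*n) → (laplaceQ k).coeff m = 0) ∧
    (∀ n : ℕ, k = m + 2*n → (laplaceQ k).coeff m =
      ((m+n).factorial : ℝ) / m.factorial * ((2:ℝ)^n)⁻¹ *
        ∑ j ∈ Finset.range (n+1), ((k+1).choose j : ℝ)) := by
  intro k
  induction k with
  | zero =>
    intro m
    constructor
    · intro h
      have hm : m ≠ 0 := fun h0 => h 0 (by omega)
      show (1 : Polynomial ℝ).coeff m = 0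
      simp [coeff_one, hm]
    · intro n hn
      have hm : m = 0 := by omega
      have hn0 : n = 0 := by omega
      subst hm; subst hn0
      show (1 : Polynomial ℝ).coeff 0 = _
      simp
  | succ k ih =>
    intro m
    constructor
    · intro h
      rw [coeff_Q, (P_coeff (k+1) m).1 h, (ih (m+1)).1 (fun n hn => h (n+1) (by omega))]
      ring
    · intro n hn
      rw [coeff_Q]
      match n with
      | 0 =>
        obtain rfl : m = k + 1 := by omega
        rw [(P_coeff (k+1) (k+1)).2 0 (by omega), (ih (k+2)).1 (fun n hn => by omega)]
        have f2 : ((k+1).factorial:ℝ) ≠ 0 := by positivity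
        simp
      | n'' + 1 =>
        rw [(P_coeff (k+1) m).2 (n''+1) (by omega), (ih (m+1)).2 n'' (by omega)]
        have e1 : m+1+n'' = m+(n''+1) := by omega
        rw [e1]
        have hcn : (k+1).choose (n''+1) * (n''+1).factorial * (m+(n''+1)).factorial
            = (k+1).factorial := by
          have h := Nat.choose_mul_factorial_mul_factorial (show n''+1 ≤ k+1 by omega)
          rwa [show k+1-(n''+1) = m+(n''+1) by omega] at h
        have hc : ((k+1).choose (n''+1) : ℝ) * (n''+1).factorial * (m+(n''+1)).factorial
            = ((k+1).factorial : ℝ) := by exact_mod_cast congrArg (Nat.cast : ℕ → ℝ) hcn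
        have hs : (∑ j ∈ Finset.range (n''+1+1), ((k+1+1).choose j : ℝ))
            = ((k+1).choose (n''+1) : ℝ) + 2 * ∑ j ∈ Finset.range (n''+1), ((k+1).choose j : ℝ) := by
          exact_mod_cast congrArg (Nat.cast : ℕ → ℝ) (sum_choose k (n''+1))
        rw [hs, ← hc]
        have f1 : ((n''+1).factorial:ℝ) ≠ 0 := by positivity
        have f2 : (m.factorial:ℝ) ≠ 0 := by positivity
        have f3 : ((m+(n''+1)).factorial:ℝ) ≠ 0 := by positivity
        rw [Nat.factorial_succ m]
        push_cast
        field_simp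
        ring

/-- The coefficients `q_{k,m}` of the Laplace polynomials `Q_k`: they vanish when `m > k`
or `k − m` is odd, and when `k − m = 2n ≥ 0` they satisfy
`q_{k,m} = (((k+m)/2)!/m!) · 2^{−n} · Σ_{j=0}^{n} C(k+1, j)`. -/
theorem laplaceQ_coeff (k m : ℕ) :
    ((m > k ∨ Odd ((k : ℤ) - m)) → (laplaceQ k).coeff m = 0) ∧
      (∀ n : ℕ, m ≤ k → k - m = 2 * n →
        (laplaceQ k).coeff m =
          ((((k + m) / 2).factorial : ℝ) / m.factorial) * ((2 : ℝ) ^ n)⁻¹ *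
            ∑ j ∈ Finset.range (n + 1), ((k + 1).choose j : ℝ)) := by
  constructor
  · intro h
    apply (Q_coeff k m).1
    intro n hn
    rcases h with h | h
    · omega
    · rw [hn] at h
      push_cast at h
      rcases h with ⟨t, ht⟩
      omega
  · intro n h1 h2
    have hk : k = m + 2*n := by omega
    rw [(Q_coeff k m).2 n hk, show (k+m)/2 = m+n by omega]
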